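/- Let M be the 3×3 real matrix with rows (1,2,0), (1,0,2), (1,0,0), let λ be the unique real root of x³ − x² − 2x − 4, and let e₁ = (1,0,0). Then for each index i ∈ {1,2,3}, the sequence k ↦ (M^k · e₁)_i / (∑_j (M^k · e₁)_j) converges to f_i, where (f₁, f₂, f₃) = (λ − 2, (λ² − 4)/λ², (λ − 2)/λ). -/

import Mathlib

open Filter

lemma aux_tendsto (l : ℝ) (hl : l ^ 3 - l ^ 2 - 2 * l - 4 = 0)
    (a : ℕ → ℝ) (ha : ∀ k, a (k+3) = a (k+2) + 2 * a (k+1) + 4 * a k) :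
    Tendsto (fun k : ℕ => a k / l ^ k) atTop
      (nhds (l * (a 2 + (l - 1) * a 1 + (4 / l) * a 0) / (l ^ 2 + 4 * l + 12))) := by
  have h2 : 2 < l := by
    by_contra h; push_neg at h
    nlinarith [mul_nonneg (by linarith : (0:ℝ) ≤ 2 - l) (sq_nonneg (l+1)), sq_nonneg (2*l-1)]
  have h3 : l < 3 := by
    by_contra h; push_neg at h
    nlinarith [mul_nonneg (by linarith : (0:ℝ) ≤ l - 3) (by nlinarith [sq_nonneg (l+1)] : (0:ℝ) ≤ l^2+2*l+4)]
  have hl0 : (0:ℝ) < l := by linarith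
  have hlne : l ≠ 0 := ne_of_gt hl0
  have hD : (0:ℝ) < l ^ 2 + 4 * l + 12 := by nlinarith
  have hDne : l ^ 2 + 4 * l + 12 ≠ 0 := ne_of_gt hD
  obtain ⟨A, hAdef⟩ : ∃ A : ℝ, A * (l^2+4*l+12) = l * a 2 + l*(l-1)*a 1 + 4*a 0 :=
    ⟨(l * a 2 + l*(l-1)*a 1 + 4*a 0) / (l^2+4*l+12), div_mul_cancel₀ _ hDne⟩
  have hAval : l * (a 2 + (l - 1) * a 1 + (4 / l) * a 0) / (l ^ 2 + 4 * l + 12) = A := by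
    rw [div_eq_iff hDne]
    field_simp
    linear_combination (-1 : ℝ) * hAdef
  set r : ℕ → ℝ := fun k => a k - A * l ^ k with hrdef
  have hr3 : ∀ k, r (k+3) = r (k+2) + 2 * r (k+1) + 4 * r k := by
    intro k
    simp only [hrdef, ha k, pow_succ]
    linear_combination (-(A * l ^ k)) * hl
  have base0 : l * r 2 = (l - l^2) * r 1 - 4 * r 0 := by
    simp only [hrdef]
    linear_combination (-1 : ℝ) * hAdef - 2*A*hl
  have base1 : l * r 3 = (l - l^2) * r 2 - 4 * r 1 := by
    simp only [hrdef, ha 0]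
    linear_combination (-l) * hAdef - (a 1 + 2*A*l) * hl
  have key : ∀ k, l * r (k+2) = (l - l^2) * r (k+1) - 4 * r k := by
    have key' : ∀ k, l * r (k+2) = (l - l^2) * r (k+1) - 4 * r k ∧
        l * r (k+3) = (l - l^2) * r (k+2) - 4 * r (k+1) := by
      intro k
      induction k with
      | zero => exact ⟨base0, base1⟩
      | succ n ih =>
        refine ⟨ih.2, ?_⟩
        have h4 := hr3 (n+1)
        show l * r (n+4) = (l - l^2) * r (n+3) - 4 * r (n+2)
        have h4' : r (n+4) = r (n+3) + 2 * r (n+2) + 4 * r (n+1) := h4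
        linear_combination l * h4' + l * ih.2 - r (n+2) * hl
    exact fun k => (key' k).1
  set E : ℕ → ℝ := fun k => l * (r (k+1))^2 - (l - l^2) * (r (k+1)) * (r k) + 4 * (r k)^2 with hEdef
  have hEstep : ∀ k, E (k+1) * l = 4 * E k := by
    intro k
    simp only [hEdef]
    linear_combination (l * r (k+2) - 4 * r k) * key k
  have hEk : ∀ k, E k * l^k = 4^k * E 0 := by
    intro k
    induction k with
    | zero => simp
    | succ n ih =>
      have : E (n+1) * l^(n+1) = (E (n+1) * l) * l^n := by ring
      rw [this, hEstep n, pow_succ]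
      calc 4 * E n * l^n = 4 * (E n * l^n) := by ring
        _ = 4 * (4^n * E 0) := by rw [ih]
        _ = 4^n * 4 * E 0 := by ring
  have hκ : (0:ℝ) < 4 - l*(l-1)^2/4 := by nlinarith
  have hEr : ∀ k, (4 - l*(l-1)^2/4) * (r k)^2 ≤ E k := by
    intro k
    simp only [hEdef]
    nlinarith [mul_nonneg hl0.le (sq_nonneg (r (k+1) + (l-1)/2 * r k))]
  have hE0 : 0 ≤ E 0 := le_trans (mul_nonneg hκ.le (sq_nonneg _)) (hEr 0)
  have hq1 : (4:ℝ)/l^3 < 1 := by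
    rw [div_lt_one (by positivity)]
    nlinarith
  have hbound : ∀ k, (r k / l^k)^2 ≤ (E 0/(4 - l*(l-1)^2/4)) * (4/l^3)^k := by
    intro k
    have hPk : (0:ℝ) < l^k := pow_pos hl0 k
    have h1 : (4 - l*(l-1)^2/4) * (r k)^2 * l^k ≤ 4^k * E 0 := by
      calc (4 - l*(l-1)^2/4) * (r k)^2 * l^k ≤ E k * l^k :=
            mul_le_mul_of_nonneg_right (hEr k) hPk.le
        _ = 4^k * E 0 := hEk k
    have e1 : ((4:ℝ)/l^3)^k = 4^k / (l^k)^3 := by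
      rw [div_pow, ← pow_mul, ← pow_mul, Nat.mul_comm]
    rw [div_pow, e1, div_mul_div_comm, div_le_div_iff₀ (by positivity) (by positivity)]
    nlinarith [mul_le_mul_of_nonneg_right h1 (sq_nonneg (l^k))]
  have htends0 : Tendsto (fun k : ℕ => (r k / l^k)^2) atTop (nhds 0) := by
    have hgeo : Tendsto (fun k : ℕ => (E 0/(4 - l*(l-1)^2/4)) * (4/l^3)^k) atTop (nhds 0) := by
      have := tendsto_pow_atTop_nhds_zero_of_lt_one (by positivity : (0:ℝ) ≤ 4/l^3) hq1
      simpa using this.const_mul (E 0/(4 - l*(l-1)^2/4))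
    exact squeeze_zero (fun k => sq_nonneg _) hbound hgeo
  have hr0 : Tendsto (fun k : ℕ => r k / l^k) atTop (nhds 0) := by
    have habs : Tendsto (fun k : ℕ => |r k / l^k|) atTop (nhds 0) := by
      have := (Real.continuous_sqrt.tendsto 0).comp htends0
      simpa [Real.sqrt_sq_eq_abs, Function.comp_def] using this
    exact tendsto_of_tendsto_of_tendsto_of_le_of_le (by simpa using habs.neg) habs
      (fun k => neg_abs_le _) (fun k => le_abs_self _)
  have hfun : (fun k : ℕ => a k / l^k) = fun k : ℕ => A + r k / l^k := by
    funext k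
    have hk : (l:ℝ)^k ≠ 0 := (pow_pos hl0 k).ne'
    simp only [hrdef]
    field_simp
    ring
  rw [hAval, hfun]
  simpa using (tendsto_const_nhds (x := A) (f := atTop)).add hr0


/-- Starting from the initiator `L₁` (encoded by `e₁ = (1,0,0)`), the relative
frequencies of the three line segment types in the `k`-th iteration converge
to the entries of the normalized right Perron–Frobenius eigenvector
`(l − 2, (l² − 4)/l², (l − 2)/l)`, where `l` is the unique real root of
`x³ − x² − 2x − 4`. -/
theorem stmt_15 (l : ℝ) (hl : l ^ 3 - l ^ 2 - 2 * l - 4 = 0) :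
    let M : Matrix (Fin 3) (Fin 3) ℝ := !![1, 2, 0; 1, 0, 2; 1, 0, 0]
    let e₁ : Fin 3 → ℝ := ![1, 0, 0]
    let f : Fin 3 → ℝ := ![l - 2, (l ^ 2 - 4) / l ^ 2, (l - 2) / l]
    ∀ i : Fin 3,
      Filter.Tendsto
        (fun k : ℕ => (M ^ k).mulVec e₁ i / ∑ j, (M ^ k).mulVec e₁ j)
        Filter.atTop (nhds (f i)) := by
  intro M e₁ f i
  have h2 : 2 < l := by
    by_contra h; push_neg at h
    nlinarith [mul_nonneg (by linarith : (0:ℝ) ≤ 2 - l) (sq_nonneg (l+1)), sq_nonneg (2*l-1)]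
  have hl0 : (0:ℝ) < l := by linarith
  have hlne : l ≠ 0 := ne_of_gt hl0
  -- Cayley–Hamilton
  have hCH : M ^ 3 = M ^ 2 + (2:ℝ) • M + (4:ℝ) • (1 : Matrix (Fin 3) (Fin 3) ℝ) := by
    simp only [M]
    ext i j
    fin_cases i <;> fin_cases j <;>
      simp [pow_succ, Matrix.mul_apply, Fin.sum_univ_three, Matrix.one_apply,
        Matrix.smul_apply, smul_eq_mul, Matrix.vecHead, Matrix.vecTail] <;> norm_num
  -- the recurrence for each coordinate
  have hrec : ∀ (j : Fin 3) (k : ℕ),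
      (M ^ (k+3)).mulVec e₁ j = (M ^ (k+2)).mulVec e₁ j + 2 * (M ^ (k+1)).mulVec e₁ j
        + 4 * (M ^ k).mulVec e₁ j := by
    intro j k
    have h1 : M ^ (k+3) = M ^ k * M ^ 3 := by rw [pow_add]
    have h2' : M ^ (k+2) = M ^ k * M ^ 2 := by rw [pow_add]
    have h3' : M ^ (k+1) = M ^ k * M ^ 1 := by rw [pow_add]
    rw [h1, hCH, h2', h3']
    simp [Matrix.mul_add, Matrix.mulVec_add, mul_smul_comm, Matrix.mulVec_smul,
      Matrix.mul_one, Matrix.smul_mulVec, Matrix.add_mulVec, Matrix.smul_mulVec,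
      Pi.add_apply, Pi.smul_apply, smul_eq_mul, pow_one]
  -- initial values
  have hv0 : ∀ j : Fin 3, (M ^ 0).mulVec e₁ j = ![(1:ℝ),0,0] j := by
    intro j
    fin_cases j <;> simp [M, e₁, Matrix.mulVec, dotProduct, Fin.sum_univ_three]
  have hv1 : ∀ j : Fin 3, (M ^ 1).mulVec e₁ j = ![(1:ℝ),1,1] j := by
    intro j
    fin_cases j <;>
      simp [M, e₁, Matrix.mulVec, dotProduct, Fin.sum_univ_three, pow_one]
  have hv2 : ∀ j : Fin 3, (M ^ 2).mulVec e₁ j = ![(3:ℝ),3,1] j := by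
    intro j
    fin_cases j <;>
      simp [M, e₁, Matrix.mulVec, dotProduct, Fin.sum_univ_three, pow_succ,
        Matrix.mul_apply] <;> norm_num
  set Av : Fin 3 → ℝ := ![l^3/(l^2+4*l+12), (l^2+2*l)/(l^2+4*l+12), l^2/(l^2+4*l+12)]
    with hAvdef
  have hD : (0:ℝ) < l ^ 2 + 4 * l + 12 := by nlinarith
  have hDne : l ^ 2 + 4 * l + 12 ≠ 0 := ne_of_gt hD
  have hAj : ∀ j : Fin 3,
      Tendsto (fun k : ℕ => (M ^ k).mulVec e₁ j / l ^ k) atTop (nhds (Av j)) := by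
    intro j
    have h := aux_tendsto l hl (fun k => (M ^ k).mulVec e₁ j) (fun k => hrec j k)
    have hval : l * ((M ^ 2).mulVec e₁ j + (l - 1) * (M ^ 1).mulVec e₁ j
        + (4 / l) * (M ^ 0).mulVec e₁ j) / (l ^ 2 + 4 * l + 12) = Av j := by
      rw [hv0 j, hv1 j, hv2 j]
      fin_cases j
      · simp [hAvdef]; field_simp; linear_combination -hl
      · simp [hAvdef]; field_simp; ring
      · simp [hAvdef]; field_simp
    rw [hval] at h
    exact h
  have hsum : Av 0 + Av 1 + Av 2 ≠ 0 := by
    simp only [hAvdef, Matrix.cons_val_zero, Matrix.cons_val_one, Matrix.head_cons,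
      Matrix.cons_val_two, Matrix.tail_cons]
    rw [← add_div, ← add_div]
    apply div_ne_zero _ hDne
    nlinarith
  have hS : Tendsto (fun k : ℕ => (∑ j, (M ^ k).mulVec e₁ j) / l ^ k) atTop
      (nhds (Av 0 + Av 1 + Av 2)) := by
    have h := ((hAj 0).add (hAj 1)).add (hAj 2)
    have e : (fun k : ℕ => (∑ j, (M ^ k).mulVec e₁ j) / l ^ k)
        = fun k : ℕ => (M ^ k).mulVec e₁ 0 / l ^ k + (M ^ k).mulVec e₁ 1 / l ^ k
            + (M ^ k).mulVec e₁ 2 / l ^ k := by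
      funext k
      rw [Fin.sum_univ_three, add_div, add_div]
    rw [e]
    exact h
  have hfi : Av i / (Av 0 + Av 1 + Av 2) = f i := by
    have hsum3 : Av 0 + Av 1 + Av 2 = (3*l^2+4*l+4)/(l^2+4*l+12) := by
      simp only [hAvdef, Matrix.cons_val_zero, Matrix.cons_val_one, Matrix.head_cons,
        Matrix.cons_val_two, Matrix.tail_cons]
      rw [← add_div, ← add_div]
      rw [show (l:ℝ)^3 + (l^2+2*l) + l^2 = 3*l^2+4*l+4 from by linear_combination hl]
    rw [hsum3]
    fin_cases i <;>
      simp only [hAvdef, f, Fin.zero_eta, Fin.mk_one, Fin.reduceFinMk, Matrix.cons_val_zero,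
        Matrix.cons_val_one, Matrix.head_cons, Matrix.cons_val_two, Matrix.tail_cons] <;>
      rw [div_div_div_cancel_right₀ hDne]
    · rw [div_eq_iff (by nlinarith : (3*l^2+4*l+4 : ℝ) ≠ 0)]
      linear_combination (-2 : ℝ) * hl
    · rw [div_eq_div_iff (by nlinarith : (3*l^2+4*l+4 : ℝ) ≠ 0) (by positivity)]
      linear_combination (-2*l-4) * hl
    · rw [div_eq_div_iff (by nlinarith : (3*l^2+4*l+4 : ℝ) ≠ 0) hlne]
      linear_combination (-2 : ℝ) * hl
  have hdiv := (hAj i).div hS hsum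
  have hdiv2 : Tendsto (fun k : ℕ => (M ^ k).mulVec e₁ i / ∑ j, (M ^ k).mulVec e₁ j)
      atTop (nhds (Av i / (Av 0 + Av 1 + Av 2))) := by
    refine hdiv.congr fun k => ?_
    exact div_div_div_cancel_right₀ (pow_ne_zero k hlne) _ _
  rw [hfi] at hdiv2
  exact hdiv2
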